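/- No diagonal of a triangulation T of a convex (n+2)-gon is a diagonal of the rotated triangulation ρ(T), where ρ is rotation by 2π/(n+2); consequently, the flip distance between T and ρ(T) is at least n−1. -/
import Mathlib


/-- The unordered pair `{a,b}` written as an ordered pair with smaller entry first. -/
def opair {m : ℕ} (a b : Fin m) : Fin m × Fin m := if a ≤ b then (a, b) else (b, a)

/-- `d` is a diagonal of the convex `(n+2)`-gon with vertices `0, …, n+1` (in cyclic order):
its endpoints are distinct, non-adjacent vertices, written in increasing order. -/
def IsDiagonal (n : ℕ) (d : Fin (n + 2) × Fin (n + 2)) : Prop :=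
  d.1 < d.2 ∧ (d.1 : ℕ) + 1 < (d.2 : ℕ) ∧ ¬((d.1 : ℕ) = 0 ∧ (d.2 : ℕ) = n + 1)

/-- Two diagonals (each written with increasing endpoints) cross in the interior. -/
def Crossing {m : ℕ} (d e : Fin m × Fin m) : Prop :=
  (d.1 < e.1 ∧ e.1 < d.2 ∧ d.2 < e.2) ∨ (e.1 < d.1 ∧ d.1 < e.2 ∧ e.2 < d.2)

/-- A triangulation of the convex `(n+2)`-gon: a maximal set of pairwise non-crossing
diagonals (which divides the polygon into `n` triangles). -/
structure Triangulation (n : ℕ) where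
  diags : Finset (Fin (n + 2) × Fin (n + 2))
  isDiag : ∀ d ∈ diags, IsDiagonal n d
  noncross : ∀ d ∈ diags, ∀ e ∈ diags, ¬ Crossing d e
  maximal : ∀ d, IsDiagonal n d → (∀ e ∈ diags, ¬ Crossing d e) → d ∈ diags

/-- The effect of rotating the polygon by `k` steps on a diagonal. -/
def rotp {m : ℕ} (k : Fin m) (d : Fin m × Fin m) : Fin m × Fin m :=
  opair (d.1 + k) (d.2 + k)

/-- Two triangulations differ by a single edge flip: each has exactly one diagonal not in
the other (the flipped diagonal of a quadrilateral). -/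
def FlipStep {n : ℕ} (T T' : Triangulation n) : Prop :=
  (T.diags \ T'.diags).card = 1 ∧ (T'.diags \ T.diags).card = 1

/-- There is a path of length `m` in the flip graph from `T` to `T'`. -/
def FlipChain {n : ℕ} (m : ℕ) (T T' : Triangulation n) : Prop :=
  ∃ f : ℕ → Triangulation n, f 0 = T ∧ f m = T' ∧ ∀ i < m, FlipStep (f i) (f (i + 1))

def NDiag (m : ℕ) (d : ℕ × ℕ) : Prop :=
  d.1 + 1 < d.2 ∧ d.2 < m ∧ ¬(d.1 = 0 ∧ d.2 + 1 = m)

def NCross (d e : ℕ × ℕ) : Prop :=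
  (d.1 < e.1 ∧ e.1 < d.2 ∧ d.2 < e.2) ∨ (e.1 < d.1 ∧ d.1 < e.2 ∧ e.2 < d.2)

theorem key_card : ∀ m : ℕ, ∀ S : Finset (ℕ × ℕ),
    (∀ d ∈ S, NDiag m d) →
    (∀ d ∈ S, ∀ e ∈ S, ¬ NCross d e) →
    (∀ d, NDiag m d → (∀ e ∈ S, ¬ NCross d e) → d ∈ S) →
    m ≤ S.card + 3 := by
  intro m
  induction m using Nat.strong_induction_on with
  | _ m IH =>
    intro S hdiag hnc hmax
    by_cases hm : m ≤ 3
    · omega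
    push_neg at hm   -- 3 < m
    -- S is nonempty
    have hne : S.Nonempty := by
      rcases S.eq_empty_or_nonempty with h | h
      · exfalso
        have : ((0, 2) : ℕ × ℕ) ∈ S := by
          apply hmax
          · exact ⟨by norm_num, by omega, by omega⟩
          · intro e he; simp [h] at he
        simp [h] at this
      · exact h
    -- choose d with minimal gap
    obtain ⟨d, hdS, hmin⟩ := S.exists_min_image (fun d => d.2 - d.1) hne
    have hdd := hdiag d hdS
    -- claim d is an ear: d.2 = d.1 + 2
    have hear : d.2 = d.1 + 2 := by
      by_contra hgap
      have hgap3 : d.1 + 3 ≤ d.2 := by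
        have := hdd.1; omega
      -- candidate e = (d.1, d.1+2)
      have hediag : NDiag m (d.1, d.1 + 2) := by
        refine ⟨by omega, by have := hdd.2.1; omega, by have := hdd.2.1; omega⟩
      have heS : (d.1, d.1 + 2) ∉ S := by
        intro hmem
        have := hmin _ hmem
        simp at this; omega
      have : ∃ g ∈ S, NCross (d.1, d.1 + 2) g := by
        by_contra hno
        push_neg at hno
        exact heS (hmax _ hediag hno)
      obtain ⟨g, hgS, hcr⟩ := this
      rcases hcr with ⟨h1, h2, h3⟩ | ⟨h1, h2, h3⟩
      · -- g.1 = d.1 + 1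
        have hg1 : g.1 = d.1 + 1 := by simp at h1 h2 h3; omega
        -- g doesn't cross d
        have hnd := hnc d hdS g hgS
        have hc2 : g.2 ≤ d.2 := by
          by_contra hc
          exact hnd (Or.inl ⟨by omega, by omega, by omega⟩)
        have := hmin _ hgS
        simp at this
        have := (hdiag g hgS).1
        omega
      · -- g.2 = d.1 + 1
        have hg2 : g.2 = d.1 + 1 := by simp at h1 h2 h3; omega
        have hnd := hnc d hdS g hgS
        exact hnd (Or.inr ⟨by omega, by omega, by omega⟩)
    -- ear vertex
    set v := d.1 + 1 with hv
    have hv1 : 1 ≤ v := by omega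
    have hvm : v + 1 < m := by have := hdd.2.1; omega
    -- no other diagonal uses v
    have hnov : ∀ e ∈ S, e ≠ d → e.1 ≠ v ∧ e.2 ≠ v := by
      intro e heS hed
      have hde := hnc d hdS e heS
      have hee := hdiag e heS
      constructor
      · intro h1
        exact hde (Or.inl ⟨by omega, by omega, by have := hee.1; omega⟩)
      · intro h2
        exact hde (Or.inr ⟨by have := hee.1; omega, by omega, by omega⟩)
    -- h also no diagonal has endpoint equal? fine
    -- the shrink map
    set f : ℕ → ℕ := fun x => if x < v then x else x - 1 with hf
    have fmono : ∀ x y : ℕ, x ≠ v → y ≠ v → (x < y ↔ f x < f y) := by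
      intro x y hx hy
      simp only [hf]
      split_ifs <;> omega
    set S' : Finset (ℕ × ℕ) := (S.erase d).image (Prod.map f f) with hS'
    have hmem' : ∀ e ∈ S.erase d, e.1 ≠ v ∧ e.2 ≠ v := by
      intro e he
      exact hnov e (Finset.mem_of_mem_erase he) (Finset.ne_of_mem_erase he)
    -- card
    have hcard : S'.card = S.card - 1 := by
      rw [hS', Finset.card_image_of_injOn, Finset.card_erase_of_mem hdS]
      intro x hx y hy hxy
      have hx' := hmem' x hx
      have hy' := hmem' y hy
      have h1 : f x.1 = f y.1 := congrArg Prod.fst hxy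
      have h2 : f x.2 = f y.2 := congrArg Prod.snd hxy
      have e1 : x.1 = y.1 := by
        by_contra hne'
        rcases Nat.lt_or_ge x.1 y.1 with h | h
        · have := (fmono x.1 y.1 hx'.1 hy'.1).1 h; omega
        · rcases Nat.lt_or_ge y.1 x.1 with h' | h'
          · have := (fmono y.1 x.1 hy'.1 hx'.1).1 h'; omega
          · omega
      have e2 : x.2 = y.2 := by
        by_contra hne'
        rcases Nat.lt_or_ge x.2 y.2 with h | h
        · have := (fmono x.2 y.2 hx'.2 hy'.2).1 h; omega
        · rcases Nat.lt_or_ge y.2 x.2 with h' | h'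
          · have := (fmono y.2 x.2 hy'.2 hx'.2).1 h'; omega
          · omega
      exact Prod.ext e1 e2
    -- hypotheses for S'
    have hdiag' : ∀ e ∈ S', NDiag (m - 1) e := by
      intro e he
      rw [hS', Finset.mem_image] at he
      obtain ⟨g, hg, rfl⟩ := he
      have hgv := hmem' g hg
      have hgd := hdiag g (Finset.mem_of_mem_erase hg)
      have hgne := Finset.ne_of_mem_erase hg
      obtain ⟨hg1, hg2, hg3⟩ := hgd
      simp only [Prod.map, hf]
      constructor
      · -- gap: if v strictly between, gap ≥ 3 since g ≠ d
        have : ¬(g.1 + 1 = v ∧ g.2 = v + 1) := by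
          intro ⟨ha, hb⟩
          apply hgne
          have : g.1 = d.1 := by omega
          have : g.2 = d.2 := by omega
          exact Prod.ext ‹g.1 = d.1› ‹g.2 = d.2›
        split_ifs <;> omega
      constructor
      · split_ifs <;> omega
      · split_ifs <;> omega
    have hnc' : ∀ e ∈ S', ∀ g ∈ S', ¬ NCross e g := by
      intro e he g hg
      rw [hS', Finset.mem_image] at he hg
      obtain ⟨e0, he0, rfl⟩ := he
      obtain ⟨g0, hg0, rfl⟩ := hg
      have he0v := hmem' e0 he0
      have hg0v := hmem' g0 hg0
      intro hcr
      apply hnc e0 (Finset.mem_of_mem_erase he0) g0 (Finset.mem_of_mem_erase hg0)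
      simp only [Prod.map] at hcr
      rcases hcr with ⟨h1, h2, h3⟩ | ⟨h1, h2, h3⟩
      · exact Or.inl ⟨(fmono _ _ he0v.1 hg0v.1).2 h1, (fmono _ _ hg0v.1 he0v.2).2 h2,
          (fmono _ _ he0v.2 hg0v.2).2 h3⟩
      · exact Or.inr ⟨(fmono _ _ hg0v.1 he0v.1).2 h1, (fmono _ _ he0v.1 hg0v.2).2 h2,
          (fmono _ _ hg0v.2 he0v.2).2 h3⟩
    have hmax' : ∀ e, NDiag (m - 1) e → (∀ g ∈ S', ¬ NCross e g) → e ∈ S' := by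
      intro e hediag hnoc
      -- lift
      set l : ℕ → ℕ := fun x => if x < v then x else x + 1 with hl
      have hlv : ∀ x, l x ≠ v := by intro x; simp only [hl]; split_ifs <;> omega
      have hfl : ∀ x, f (l x) = x := by
        intro x; simp only [hl, hf]; split_ifs <;> omega
      have hlmono : ∀ x y : ℕ, (x < y ↔ l x < l y) := by
        intro x y; simp only [hl]; split_ifs <;> omega
      obtain ⟨he1, he2, he3⟩ := hediag
      have hLdiag : NDiag m (l e.1, l e.2) := by
        refine ⟨?_, ?_, ?_⟩
        · simp only [hl]; split_ifs <;> omega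
        · simp only [hl]; split_ifs <;> omega
        · rintro ⟨ha, hb⟩
          simp only [hl] at ha hb
          split_ifs at ha hb <;> omega
      have hLS : (l e.1, l e.2) ∈ S := by
        apply hmax _ hLdiag
        intro g hgS
        by_cases hgd : g = d
        · subst hgd
          intro hcr
          rcases hcr with ⟨h1, h2, h3⟩ | ⟨h1, h2, h3⟩
          · simp only at h1 h2 h3
            have := hlv e.1; have := hlv e.2; omega
          · simp only at h1 h2 h3
            have := hlv e.1; have := hlv e.2; omega
        · intro hcr
          apply hnoc (Prod.map f f g)
          · rw [hS', Finset.mem_image]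
            exact ⟨g, Finset.mem_erase.mpr ⟨hgd, hgS⟩, rfl⟩
          · have hgv := hnov g hgS hgd
            simp only [Prod.map]
            rcases hcr with ⟨h1, h2, h3⟩ | ⟨h1, h2, h3⟩
            · refine Or.inl ⟨?_, ?_, ?_⟩
              · rw [← hfl e.1]; exact (fmono _ _ (hlv e.1) hgv.1).1 h1
              · rw [← hfl e.2]; exact (fmono _ _ hgv.1 (hlv e.2)).1 h2
              · rw [← hfl e.2]; exact (fmono _ _ (hlv e.2) hgv.2).1 h3
            · refine Or.inr ⟨?_, ?_, ?_⟩
              · rw [← hfl e.1]; exact (fmono _ _ hgv.1 (hlv e.1)).1 h1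
              · rw [← hfl e.1]; exact (fmono _ _ (hlv e.1) hgv.2).1 h2
              · rw [← hfl e.2]; exact (fmono _ _ hgv.2 (hlv e.2)).1 h3
      have hLne : (l e.1, l e.2) ≠ d := by
        intro h
        have h1 : f (l e.1) = f d.1 := congrArg f (congrArg Prod.fst h)
        have h2 : f (l e.2) = f d.2 := congrArg f (congrArg Prod.snd h)
        rw [hfl] at h1 h2
        simp only [hf] at h1 h2
        split_ifs at h1 h2 <;> omega
      rw [hS', Finset.mem_image]
      refine ⟨(l e.1, l e.2), Finset.mem_erase.mpr ⟨hLne, hLS⟩, ?_⟩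
      simp only [Prod.map, hfl]
    have hm1 : m - 1 ≤ S'.card + 3 := IH (m - 1) (by omega) S' hdiag' hnc' hmax'
    have : 1 ≤ S.card := Finset.card_pos.mpr hne
    omega

lemma crossing_iff {m : ℕ} (d e : Fin m × Fin m) :
    Crossing d e ↔ NCross ((d.1 : ℕ), (d.2 : ℕ)) ((e.1 : ℕ), (e.2 : ℕ)) := Iff.rfl

lemma sub_one_val {n : ℕ} (x : Fin (n + 2)) :
    ((x + (-1) : Fin (n + 2)) : ℕ) = if (x : ℕ) = 0 then n + 1 else (x : ℕ) - 1 := by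
  have hx := x.isLt
  rw [Fin.val_add, Fin.coe_neg_one]
  split_ifs with h
  · have h0 : (0:ℕ) + (n+1) = n+1 := by omega
    rw [h, h0]
    exact Nat.mod_eq_of_lt (by omega)
  · have h1 : (x : ℕ) + (n + 1) - (n + 2) = (x : ℕ) - 1 := by omega
    rw [Nat.mod_eq_sub_mod (by omega), h1]
    exact Nat.mod_eq_of_lt (by omega)

lemma tri_card_ge (n : ℕ) (T : Triangulation n) : n + 2 ≤ T.diags.card + 3 := by
  have hinj : Set.InjOn (fun d : Fin (n+2) × Fin (n+2) => ((d.1 : ℕ), (d.2 : ℕ)))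
      (T.diags : Set (Fin (n+2) × Fin (n+2))) := by
    intro x _ y _ hxy
    simp only [Prod.mk.injEq] at hxy
    exact Prod.ext (Fin.val_injective hxy.1) (Fin.val_injective hxy.2)
  have h := key_card (n + 2) (T.diags.image (fun d => ((d.1 : ℕ), (d.2 : ℕ)))) ?_ ?_ ?_
  · rwa [Finset.card_image_of_injOn hinj] at h
  · intro p hp
    rw [Finset.mem_image] at hp
    obtain ⟨d, hd, rfl⟩ := hp
    obtain ⟨h1, h2, h3⟩ := T.isDiag d hd
    have := d.2.isLt
    exact ⟨h2, this, by omega⟩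
  · intro p hp q hq
    rw [Finset.mem_image] at hp hq
    obtain ⟨d, hd, rfl⟩ := hp
    obtain ⟨e, he, rfl⟩ := hq
    rw [← crossing_iff]
    exact T.noncross d hd e he
  · intro p hp hnc
    obtain ⟨h1, h2, h3⟩ := hp
    set D : Fin (n+2) × Fin (n+2) := (⟨p.1, by omega⟩, ⟨p.2, h2⟩) with hD
    have hDdiag : IsDiagonal n D := by
      refine ⟨?_, ?_, ?_⟩
      · rw [Fin.lt_def]; simp [hD]; omega
      · simp [hD]; omega
      · simp [hD]; omega
    have hDmem : D ∈ T.diags := by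
      apply T.maximal D hDdiag
      intro e he
      rw [crossing_iff]
      have := hnc _ (Finset.mem_image_of_mem (fun d => ((d.1 : ℕ), (d.2 : ℕ))) he)
      simpa [hD] using this
    rw [Finset.mem_image]
    exact ⟨D, hDmem, by simp [hD]⟩

lemma chain_bound {n : ℕ} (T T' : Triangulation n) (m : ℕ) (h : FlipChain m T T') :
    (T.diags \ T'.diags).card ≤ m := by
  obtain ⟨f, h0, hm, hstep⟩ := h
  have key : ∀ j, j ≤ m → ((f (m - j)).diags \ T'.diags).card ≤ j := by
    intro j
    induction j with
    | zero => intro _; simp [hm]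
    | succ j ih =>
      intro hj
      have hij : m - (j + 1) + 1 = m - j := by omega
      have hstep' := (hstep (m - (j + 1)) (by omega)).1
      rw [hij] at hstep'
      have hsub : (f (m - (j+1))).diags \ T'.diags ⊆
          ((f (m - j)).diags \ T'.diags) ∪ ((f (m - (j+1))).diags \ (f (m - j)).diags) := by
        intro x hx
        simp only [Finset.mem_sdiff, Finset.mem_union] at hx ⊢
        tauto
      calc ((f (m - (j+1))).diags \ T'.diags).card
          ≤ (((f (m - j)).diags \ T'.diags) ∪ ((f (m - (j+1))).diags \ (f (m - j)).diags)).card :=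
            Finset.card_le_card hsub
        _ ≤ ((f (m - j)).diags \ T'.diags).card + ((f (m - (j+1))).diags \ (f (m - j)).diags).card :=
            Finset.card_union_le _ _
        _ ≤ j + 1 := by rw [hstep']; exact Nat.add_le_add_right (ih (by omega)) 1
  have hfin := key m le_rfl
  simpa [h0] using hfin

/-- No diagonal of a triangulation `T` of a convex `(n+2)`-gon is a diagonal of its
counterclockwise rotation `ρ(T)` by `2π/(n+2)` (which sends `D_{i,j}` to `D_{i-1,j-1}`);
consequently, since each flip changes exactly one diagonal and `T` has `n-1` diagonals,
the flip distance from `T` to `ρ(T)` is at least `n-1`. -/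
theorem rotation_shares_no_diagonal_and_flip_distance (n : ℕ) (T T' : Triangulation n)
    (hT' : T'.diags = T.diags.image (rotp (-1 : Fin (n + 2)))) :
    (∀ d ∈ T.diags, d ∉ T'.diags) ∧ ∀ m : ℕ, FlipChain m T T' → n - 1 ≤ m := by
  have hdisj : ∀ d ∈ T.diags, d ∉ T'.diags := by
    intro d hd hd'
    rw [hT', Finset.mem_image] at hd'
    obtain ⟨e, heT, hrot⟩ := hd'
    obtain ⟨hd1, hd2, hd3⟩ := T.isDiag d hd
    obtain ⟨he1, he2, he3⟩ := T.isDiag e heT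
    rw [Fin.lt_def] at hd1 he1
    have hb := d.2.isLt
    have hy := e.2.isLt
    apply T.noncross d hd e heT
    rw [crossing_iff]
    unfold rotp opair at hrot
    have hP := sub_one_val e.1
    have hQ := sub_one_val e.2
    split_ifs at hrot with hle
    · have h1 : ((e.1 + (-1) : Fin (n+2)) : ℕ) = (d.1 : ℕ) :=
        congrArg (fun p : Fin (n+2) × Fin (n+2) => (p.1 : ℕ)) hrot
      have h2 : ((e.2 + (-1) : Fin (n+2)) : ℕ) = (d.2 : ℕ) :=
        congrArg (fun p : Fin (n+2) × Fin (n+2) => (p.2 : ℕ)) hrot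
      rw [hP] at h1; rw [hQ] at h2
      simp only [NCross]
      split_ifs at h1 h2 <;> omega
    · have h1 : ((e.2 + (-1) : Fin (n+2)) : ℕ) = (d.1 : ℕ) :=
        congrArg (fun p : Fin (n+2) × Fin (n+2) => (p.1 : ℕ)) hrot
      have h2 : ((e.1 + (-1) : Fin (n+2)) : ℕ) = (d.2 : ℕ) :=
        congrArg (fun p : Fin (n+2) × Fin (n+2) => (p.2 : ℕ)) hrot
      rw [hQ] at h1; rw [hP] at h2
      simp only [NCross]
      split_ifs at h1 h2 <;> omega
  refine ⟨hdisj, ?_⟩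
  intro m hchain
  have h1 : T.diags \ T'.diags = T.diags := by
    rw [Finset.sdiff_eq_self_iff_disjoint]
    exact Finset.disjoint_left.mpr (fun a ha => hdisj a ha)
  have h2 := chain_bound T T' m hchain
  have h3 := tri_card_ge n T
  rw [h1] at h2
  omega
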